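/- arXiv:1310.8461 — 4 statements merged into one kernel-verified Lean document; each statement's English description precedes it below -/
import Mathlib

section
/- Let A be a nonnegative tensor of order m and dimension n. The following are equivalent: (1) a_{ij…j} > 0 for all i, j ∈ [n]; (2) A·e_j > 0 (entrywise) for every standard basis vector e_j; (3) A·x > 0 (entrywise) for every nonnegative nonzero vector x ∈ ℝⁿ, where (A x)_i = Σ_{i₂,…,i_m} a_{i i₂ ⋯ i_m} x_{i₂} ⋯ x_{i_m}. -/
open Finset

/- An order-`m` dimension-`n` nonnegative tensor is encoded as
`A : Fin n → (Fin (m-1) → Fin n) → ℝ`, with `A i t = a_{i t₁ ⋯ t_{m-1}}`. -/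

/-- The majorization matrix `M(A)_{ij} = a_{ij⋯j}`. -/
def maj (n m : ℕ) (A : Fin n → (Fin (m-1) → Fin n) → ℝ) :
    Matrix (Fin n) (Fin n) ℝ :=
  fun i j => A i (fun _ => j)

/-- The majorization matrices of the Shao-product powers of `A`:
`majPow n m A k = M(A^k)`, via the recursion
`M(A^{k+1})_{uj} = Σ_{j₂,…,j_m} a_{u j₂ ⋯ j_m} M(A^k)_{j₂ j} ⋯ M(A^k)_{j_m j}`
(with `M(A^0)` the identity, so that `majPow n m A 1 = maj n m A`). -/
def majPow (n m : ℕ) (A : Fin n → (Fin (m-1) → Fin n) → ℝ) :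
    ℕ → Matrix (Fin n) (Fin n) ℝ
  | 0 => 1
  | k + 1 => fun u j =>
      ∑ t : Fin (m-1) → Fin n, A u t * ∏ i, majPow n m A k (t i) j

/-- `A` is primitive: `M(A^r) > 0` entrywise for some positive `r`. -/
def Primitive (n m : ℕ) (A : Fin n → (Fin (m-1) → Fin n) → ℝ) : Prop :=
  ∃ r, 0 < r ∧ ∀ u j, 0 < majPow n m A r u j

/-- `(A x)_i = Σ_{i₂,…,i_m} a_{i i₂ ⋯ i_m} x_{i₂} ⋯ x_{i_m}`. -/
def tApply (n m : ℕ) (A : Fin n → (Fin (m-1) → Fin n) → ℝ)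
    (x : Fin n → ℝ) : Fin n → ℝ :=
  fun i => ∑ t : Fin (m-1) → Fin n, A i t * ∏ k, x (t k)

lemma tApply_single (n m : ℕ) (A : Fin n → (Fin (m-1) → Fin n) → ℝ)
    (j i : Fin n) : tApply n m A (Pi.single j 1) i = A i (fun _ => j) := by
  unfold tApply
  rw [Finset.sum_eq_single (fun _ => j)]
  · simp
  · intro t _ ht
    have : ∃ k, t k ≠ j := by
      by_contra h
      push_neg at h
      exact ht (funext h)
    obtain ⟨k, hk⟩ := this
    have hz : (Pi.single j 1 : Fin n → ℝ) (t k) = 0 := by simp [Pi.single_eq_of_ne hk]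
    rw [Finset.prod_eq_zero (Finset.mem_univ k) hz, mul_zero]
  · simp

/-- equivalence of the three conditions for essential positivity. -/
theorem stmt_1 (n m : ℕ) (hm : 2 ≤ m)
    (A : Fin n → (Fin (m-1) → Fin n) → ℝ) (hA : ∀ u t, 0 ≤ A u t) :
    ((∀ i j : Fin n, 0 < A i (fun _ => j)) ↔
      (∀ j i : Fin n, 0 < tApply n m A (Pi.single j 1) i)) ∧
    ((∀ j i : Fin n, 0 < tApply n m A (Pi.single j 1) i) ↔
      (∀ x : Fin n → ℝ, (∀ k, 0 ≤ x k) → x ≠ 0 →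
        ∀ i, 0 < tApply n m A x i)) := by
  constructor
  · constructor
    · intro h j i; rw [tApply_single]; exact h i j
    · intro h i j; rw [← tApply_single n m A j i]; exact h j i
  · constructor
    · intro h x hx hx0 i
      obtain ⟨j, hj⟩ : ∃ j, 0 < x j := by
        by_contra hc
        push_neg at hc
        exact hx0 (funext fun k => le_antisymm (hc k) (hx k))
      have hAij : 0 < A i (fun _ => j) := by
        rw [← tApply_single n m A j i]; exact h j i
      have hterm : 0 < A i (fun _ => j) * ∏ k : Fin (m-1), x ((fun _ => j) k) := by
        apply mul_pos hAij
        exact Finset.prod_pos (fun k _ => hj)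
      have : A i (fun _ => j) * ∏ k : Fin (m-1), x ((fun _ => j) k) ≤ tApply n m A x i := by
        unfold tApply
        exact Finset.single_le_sum (f := fun t => A i t * ∏ k, x (t k))
          (fun t _ => mul_nonneg (hA i t) (Finset.prod_nonneg fun k _ => hx (t k)))
          (Finset.mem_univ _)
      linarith
    · intro h j i
      apply h
      · intro k
        by_cases hk : k = j
        · subst hk; simp
        · simp [Pi.single_eq_of_ne hk]
      · intro he
        have := congrFun he j
        simp at this
end

section
/- Let A be a nonnegative tensor of order m and dimension n such that every column of M(A) contains at most one positive entry. Then for every positive integer t, every column of M(A^t) contains at most one positive entry. In particular A is not primitive (for n ≥ 2). -/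
open Finset

lemma majPow_nonneg (n m : ℕ) (A : Fin n → (Fin (m-1) → Fin n) → ℝ)
    (hA : ∀ u t, 0 ≤ A u t) : ∀ k u j, 0 ≤ majPow n m A k u j := by
  intro k
  induction k with
  | zero =>
      intro u j
      simp [majPow, Matrix.one_apply]
      positivity
  | succ k ih =>
      intro u j
      show 0 ≤ ∑ t : Fin (m-1) → Fin n, A u t * ∏ i, majPow n m A k (t i) j
      apply Finset.sum_nonneg
      intro t _
      exact mul_nonneg (hA u t) (Finset.prod_nonneg fun i _ => ih (t i) j)

lemma key (n m : ℕ) (hm : 2 ≤ m)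
    (A : Fin n → (Fin (m-1) → Fin n) → ℝ) (hA : ∀ u t, 0 ≤ A u t)
    (h : ∀ j u v : Fin n, 0 < maj n m A u j → 0 < maj n m A v j → u = v) :
    ∀ k j u v, 0 < majPow n m A k u j → 0 < majPow n m A k v j → u = v := by
  intro k
  induction k with
  | zero =>
      intro j u v hu hv
      simp only [majPow, Matrix.one_apply] at hu hv
      by_cases h1 : u = j
      · by_cases h2 : v = j
        · rw [h1, h2]
        · simp [h2] at hv
      · simp [h1] at hu
  | succ k ih =>
      intro j u v hu hv
      have i0 : Fin (m-1) := ⟨0, by omega⟩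
      have extract : ∀ w : Fin n,
          0 < majPow n m A (k+1) w j → ∃ x : Fin n,
            0 < maj n m A w x ∧ 0 < majPow n m A k x j := by
        intro w hw
        have hw' : (0:ℝ) < ∑ t : Fin (m-1) → Fin n,
            A w t * ∏ i, majPow n m A k (t i) j := hw
        have : ∃ t : Fin (m-1) → Fin n,
            0 < A w t * ∏ i, majPow n m A k (t i) j := by
          by_contra hc
          push_neg at hc
          have : (∑ t : Fin (m-1) → Fin n,
              A w t * ∏ i, majPow n m A k (t i) j) ≤ 0 :=
            Finset.sum_nonpos fun t _ => hc t
          linarith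
        obtain ⟨t, ht⟩ := this
        have hprod : 0 < ∏ i, majPow n m A k (t i) j := by
          rcases mul_pos_iff.mp ht with ⟨_, hp⟩ | ⟨ha, _⟩
          · exact hp
          · exact absurd ha (not_lt.mpr (hA w t))
        have hfac : ∀ i : Fin (m-1), 0 < majPow n m A k (t i) j := by
          intro i
          by_contra hi
          have : majPow n m A k (t i) j = 0 :=
            le_antisymm (not_lt.mp hi) (majPow_nonneg n m A hA k (t i) j)
          have : (∏ i, majPow n m A k (t i) j) = 0 :=
            Finset.prod_eq_zero (Finset.mem_univ i) this
          rw [this] at hprod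
          exact lt_irrefl 0 hprod
        have hconst : ∀ i, t i = t i0 := fun i => ih j (t i) (t i0) (hfac i) (hfac i0)
        refine ⟨t i0, ?_, hfac i0⟩
        have : t = fun _ => t i0 := funext hconst
        have hApos : 0 < A w t := by
          rcases mul_pos_iff.mp ht with ⟨ha, _⟩ | ⟨ha, _⟩
          · exact ha
          · exact absurd ha (not_lt.mpr (hA w t))
        rw [this] at hApos
        exact hApos
      obtain ⟨x, hux, hxj⟩ := extract u hu
      obtain ⟨y, hvy, hyj⟩ := extract v hv
      have hxy : x = y := ih j x y hxj hyj
      exact h x u v hux (hxy ▸ hvy)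

/-- if every column of `M(A)` has at most one positive entry,
the same holds for every `M(A^t)`; in particular `A` is not primitive when `n ≥ 2`. -/
theorem stmt_5 (n m : ℕ) (hm : 2 ≤ m)
    (A : Fin n → (Fin (m-1) → Fin n) → ℝ) (hA : ∀ u t, 0 ≤ A u t)
    (h : ∀ j u v : Fin n, 0 < maj n m A u j → 0 < maj n m A v j → u = v) :
    (∀ t : ℕ, 1 ≤ t → ∀ j u v : Fin n,
       0 < majPow n m A t u j → 0 < majPow n m A t v j → u = v) ∧
    (2 ≤ n → ¬ Primitive n m A) := by
  constructor
  · intro t _ j u v hu hv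
    exact key n m hm A hA h t j u v hu hv
  · intro hn ⟨r, hr, hpos⟩
    have h01 : (⟨0, by omega⟩ : Fin n) = (⟨1, by omega⟩ : Fin n) :=
      key n m hm A hA h r ⟨0, by omega⟩ _ _ (hpos _ _) (hpos _ _)
    simp at h01
end

section
/- Let A be a nonnegative tensor of order m and dimension n such that a_{i i₂ ⋯ i_m} = 0 whenever the indices i₂,…,i_m are not all equal. Then for every positive integer r, the zero pattern of M(A^r) equals the zero pattern of the matrix power (M(A))^r; i.e., M(A^r)_{ij} > 0 if and only if ((M(A))^r)_{ij} > 0 for all i, j ∈ [n]. -/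
open Finset

/-- if `a_{i i₂⋯i_m} = 0` unless `i₂ = ⋯ = i_m`, then the zero
pattern of `M(A^r)` equals that of the ordinary matrix power `(M(A))^r`. -/
theorem stmt_14 (n m : ℕ) (hm : 2 ≤ m)
    (A : Fin n → (Fin (m-1) → Fin n) → ℝ) (hA : ∀ u t, 0 ≤ A u t)
    (hdiag : ∀ (i : Fin n) (t : Fin (m-1) → Fin n),
      (¬ ∀ k k' : Fin (m-1), t k = t k') → A i t = 0) :
    ∀ r : ℕ, 1 ≤ r → ∀ i j : Fin n,
      (0 < majPow n m A r i j ↔ 0 < ((maj n m A) ^ r) i j) := by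
  have hm1 : 0 < m - 1 := by omega
  let i0 : Fin (m - 1) := ⟨0, hm1⟩
  have hMnn : ∀ k (u j : Fin n), 0 ≤ majPow n m A k u j := by
    intro k
    induction k with
    | zero =>
      intro u j
      simp only [majPow, Matrix.one_apply]
      split <;> norm_num
    | succ k ih =>
      intro u j
      exact Finset.sum_nonneg fun t _ =>
        mul_nonneg (hA u t) (Finset.prod_nonneg fun i _ => ih (t i) j)
  have hPnn : ∀ k (u j : Fin n), 0 ≤ ((maj n m A) ^ k) u j := by
    intro k
    induction k with
    | zero =>
      intro u j
      simp only [pow_zero, Matrix.one_apply]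
      split <;> norm_num
    | succ k ih =>
      intro u j
      rw [pow_succ', Matrix.mul_apply]
      exact Finset.sum_nonneg fun v _ => mul_nonneg (hA u _) (ih v j)
  have key : ∀ k (u j : Fin n),
      0 < majPow n m A k u j ↔ 0 < ((maj n m A) ^ k) u j := by
    intro k
    induction k with
    | zero => intro u j; simp [majPow]
    | succ k ih =>
      intro u j
      constructor
      · intro h
        have h' : 0 < ∑ t : Fin (m-1) → Fin n, A u t * ∏ i, majPow n m A k (t i) j := h
        obtain ⟨t, _, ht⟩ :
            ∃ t ∈ (Finset.univ : Finset (Fin (m-1) → Fin n)),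
              0 < A u t * ∏ i, majPow n m A k (t i) j := by
          by_contra hc
          push_neg at hc
          have : (∑ t : Fin (m-1) → Fin n, A u t * ∏ i, majPow n m A k (t i) j) ≤ 0 :=
            Finset.sum_nonpos fun t htm => hc t htm
          linarith
        have hApos : 0 < A u t := by
          rcases mul_pos_iff.mp ht with ⟨h1, _⟩ | ⟨h1, _⟩
          · exact h1
          · exact absurd h1 (not_lt.mpr (hA u t))
        have hprod : 0 < ∏ i, majPow n m A k (t i) j := by
          rcases mul_pos_iff.mp ht with ⟨_, h2⟩ | ⟨h1, _⟩
          · exact h2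
          · exact absurd h1 (not_lt.mpr (hA u t))
        have hconst : ∀ k' : Fin (m-1), t k' = t i0 := by
          by_contra hc
          push_neg at hc
          obtain ⟨k', hk'⟩ := hc
          have : A u t = 0 := hdiag u t (by
            intro hall
            exact hk' (hall k' i0))
          linarith
        set v := t i0 with hv
        have hfact : 0 < majPow n m A k v j := by
          by_contra hc
          push_neg at hc
          have hz : majPow n m A k v j = 0 := le_antisymm hc (hMnn k v j)
          have : (∏ i, majPow n m A k (t i) j) = 0 := by
            apply Finset.prod_eq_zero (Finset.mem_univ i0)
            rw [← hv]; exact hz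
          linarith
        have hmaj : 0 < maj n m A u v := by
          have : (fun _ : Fin (m-1) => v) = t := by
            funext i; exact (hconst i).symm
          simpa [maj, this] using hApos
        have hpow : 0 < ((maj n m A) ^ k) v j := (ih v j).mp hfact
        rw [pow_succ', Matrix.mul_apply]
        exact Finset.sum_pos'
          (fun w _ => mul_nonneg (hA u _) (hPnn k w j))
          ⟨v, Finset.mem_univ v, mul_pos hmaj hpow⟩
      · intro h
        rw [pow_succ', Matrix.mul_apply] at h
        obtain ⟨v, _, hv⟩ :
            ∃ v ∈ (Finset.univ : Finset (Fin n)),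
              0 < maj n m A u v * ((maj n m A) ^ k) v j := by
          by_contra hc
          push_neg at hc
          have : (∑ v, maj n m A u v * ((maj n m A) ^ k) v j) ≤ 0 :=
            Finset.sum_nonpos fun v hvm => hc v hvm
          linarith
        have hmaj : 0 < maj n m A u v := by
          rcases mul_pos_iff.mp hv with ⟨h1, _⟩ | ⟨h1, _⟩
          · exact h1
          · exact absurd h1 (not_lt.mpr (hA u _))
        have hpow : 0 < ((maj n m A) ^ k) v j := by
          rcases mul_pos_iff.mp hv with ⟨_, h2⟩ | ⟨h1, _⟩
          · exact h2
          · exact absurd h1 (not_lt.mpr (hA u _))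
        have hfact : 0 < majPow n m A k v j := (ih v j).mpr hpow
        show 0 < ∑ t : Fin (m-1) → Fin n, A u t * ∏ i, majPow n m A k (t i) j
        refine Finset.sum_pos'
          (fun t _ => mul_nonneg (hA u t)
            (Finset.prod_nonneg fun i _ => hMnn k (t i) j))
          ⟨fun _ => v, Finset.mem_univ _, ?_⟩
        exact mul_pos hmaj (Finset.prod_pos fun i _ => hfact)
  intro r _ i j
  exact key r i j
end

section
/- For each n ≥ 2 and m ≥ 2 there exists a nonnegative primitive tensor A of order m and dimension n with γ(A) = (n−1)² + 1; namely, take A with a_{i i₂ ⋯ i_m} positive exactly when i₂ = ⋯ = i_m and M(A) equals the Wielandt matrix (the companion-type 0-1 matrix with 1's in positions (1, n−1), (1, n), and (i+1, i) for 1 ≤ i ≤ n−1). -/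
open Finset

/-- The Wielandt matrix (0-indexed): ones at `(0, n-2)`, `(0, n-1)` and
`(i+1, i)` for `0 ≤ i ≤ n-2`. -/
def wielandt (n : ℕ) : Matrix (Fin n) (Fin n) ℝ :=
  fun i j =>
    if (i.val = 0 ∧ (j.val = n - 2 ∨ j.val = n - 1)) ∨ i.val = j.val + 1
    then 1 else 0

namespace Stmt19Aux

/-- walk relation in the Wielandt digraph -/
def reach (n : ℕ) : ℕ → Fin n → Fin n → Prop
  | 0, u, v => u = v
  | k + 1, u, v => ∃ c : Fin n,
      ((u.val = 0 ∧ (c.val = n - 2 ∨ c.val = n - 1)) ∨ u.val = c.val + 1) ∧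
      reach n k c v

lemma reach_zero_iff {n : ℕ} (u v : Fin n) : reach n 0 u v ↔ u = v := Iff.rfl

lemma reach_succ_iff {n k : ℕ} (u v : Fin n) :
    reach n (k+1) u v ↔ ∃ c : Fin n,
      ((u.val = 0 ∧ (c.val = n - 2 ∨ c.val = n - 1)) ∨ u.val = c.val + 1) ∧
      reach n k c v := Iff.rfl

lemma reach_trans {n : ℕ} : ∀ {k l : ℕ} {u c v : Fin n},
    reach n k u c → reach n l c v → reach n (k + l) u v := by
  intro k
  induction k with
  | zero => intro l u c v h1 h2; rw [reach_zero_iff] at h1; subst h1; simpa using h2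
  | succ k ih =>
    intro l u c v h1 h2
    rw [reach_succ_iff] at h1
    obtain ⟨c', hE, hr⟩ := h1
    have : k + 1 + l = (k + l) + 1 := by omega
    rw [this, reach_succ_iff]
    exact ⟨c', hE, ih hr h2⟩

lemma reach_desc {n : ℕ} : ∀ (k : ℕ) (u v : Fin n), u.val = v.val + k → reach n k u v := by
  intro k
  induction k with
  | zero => intro u v h; rw [reach_zero_iff]; exact Fin.ext (by omega)
  | succ k ih =>
    intro u v h
    rw [reach_succ_iff]
    refine ⟨⟨v.val + k, by have := u.isLt; omega⟩, Or.inr (by simp; omega), ?_⟩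
    exact ih _ v (by simp)

variable {N : ℕ}

lemma reach_cycle_n (u : Fin (N+2)) (hu : u.val = 0) : reach (N+2) (N+2) u u := by
  refine (reach_succ_iff (k := N+1) u u).mpr ⟨⟨N+1, by omega⟩, Or.inl ⟨hu, Or.inr (by simp)⟩, ?_⟩
  exact reach_desc _ _ u (by simp [hu])

lemma reach_cycle_n1 (u : Fin (N+2)) (hu : u.val = 0) : reach (N+2) (N+1) u u := by
  rw [show N + 1 = N + 1 by rfl, reach_succ_iff]
  refine ⟨⟨N, by omega⟩, Or.inl ⟨hu, Or.inl (by simp)⟩, ?_⟩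
  exact reach_desc _ _ u (by simp [hu])

lemma reach_rep (a b : ℕ) (u : Fin (N+2)) (hu : u.val = 0) :
    reach (N+2) (a * (N+2) + b * (N+1)) u u := by
  induction a with
  | zero =>
    simp only [Nat.zero_mul, Nat.zero_add]
    induction b with
    | zero => rw [Nat.zero_mul, reach_zero_iff]
    | succ b ihb =>
      have h : (b+1) * (N+1) = (N+1) + b * (N+1) := by ring
      rw [h]
      exact reach_trans (reach_cycle_n1 u hu) ihb
  | succ a iha =>
    have h : (a+1) * (N+2) + b * (N+1) = (N+2) + (a * (N+2) + b * (N+1)) := by ring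
    rw [h]
    exact reach_trans (reach_cycle_n u hu) iha

lemma reach_to_hi (u v : Fin (N+2)) (hu : u.val = 0) : reach (N+2) (N+2 - v.val) u v := by
  have hv := v.isLt
  rw [show N + 2 - v.val = (N+1 - v.val) + 1 by omega, reach_succ_iff]
  refine ⟨⟨N+1, by omega⟩, Or.inl ⟨hu, Or.inr (by simp)⟩, ?_⟩
  exact reach_desc _ _ v (by simp; omega)

lemma reach_to_lo (u v : Fin (N+2)) (hu : u.val = 0) (hv : v.val ≤ N) :
    reach (N+2) (N+1 - v.val) u v := by
  rw [show N + 1 - v.val = (N - v.val) + 1 by omega, reach_succ_iff]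
  refine ⟨⟨N, by omega⟩, Or.inl ⟨hu, Or.inl (by simp)⟩, ?_⟩
  exact reach_desc _ _ v (by simp; omega)

lemma reach_comp (u v : Fin (N+2)) (a b e r : ℕ)
    (he : ∀ w : Fin (N+2), w.val = 0 → reach (N+2) e w v)
    (hr : r = u.val + (a * (N+2) + b * (N+1) + e)) :
    reach (N+2) r u v := by
  subst hr
  have h0 : ((⟨0, by omega⟩ : Fin (N+2))).val = 0 := rfl
  refine reach_trans (reach_desc u.val u ⟨0, by omega⟩ (by simp)) ?_
  have : a * (N+2) + b * (N+1) + e = (a * (N+2) + b * (N+1)) + e := by ring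
  rw [this]
  exact reach_trans (reach_rep a b _ h0) (he _ h0)

lemma reach_all (u v : Fin (N+2)) : reach (N+2) ((N+1)^2 + 1) u v := by
  have hu := u.isLt
  have hv := v.isLt
  by_cases hV : v.val = N+1
  · -- e = 1 = N+2 - v.val
    have he : ∀ w : Fin (N+2), w.val = 0 → reach (N+2) 1 w v := by
      intro w hw
      have := reach_to_hi w v hw
      rwa [show N + 2 - v.val = 1 by omega] at this
    by_cases hU : u.val = 0
    · exact reach_comp u v 0 (N+1) 1 _ he (by rw [hU]; ring)
    · refine reach_comp u v (N+1 - u.val) (u.val - 1) 1 _ he ?_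
      zify [show u.val ≤ N+1 by omega, show 1 ≤ u.val by omega]
      ring
  · -- v.val ≤ N
    have hvN : v.val ≤ N := by omega
    have heHi : ∀ w : Fin (N+2), w.val = 0 → reach (N+2) (N+2-v.val) w v :=
      fun w hw => reach_to_hi w v hw
    have heLo : ∀ w : Fin (N+2), w.val = 0 → reach (N+2) (N+1-v.val) w v :=
      fun w hw => reach_to_lo w v hw hvN
    rcases Nat.lt_or_ge v.val u.val with hlt | hge
    · rcases Nat.lt_or_ge u.val (v.val + 2) with h2 | h3
      · -- u = v+1 : k = 0, e = N+1-v, a=0, b=N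
        have hu1 : u.val = v.val + 1 := by omega
        refine reach_comp u v 0 N _ _ heLo ?_
        zify [show v.val ≤ N+1 by omega, hvN]
        rw [hu1]; push_cast; ring
      · rcases Nat.eq_or_lt_of_le h3 with h2' | h4
        · -- u = v+2 : e = N+2-v, a = N-1, b = 0
          have hN1 : 1 ≤ N := by omega
          refine reach_comp u v (N-1) 0 _ _ heHi ?_
          zify [show v.val ≤ N+2 by omega, hN1]
          rw [← h2']; push_cast; ring
        · -- u ≥ v+3 : k = u-v-1 ∈ [2,N], e = N+1-v, a = N+1-k, b = k-2
          have hk2 : 2 ≤ u.val - v.val - 1 := by omega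
          have hkN : u.val - v.val - 1 ≤ N := by omega
          refine reach_comp u v (N+1 - (u.val - v.val - 1)) (u.val - v.val - 1 - 2) _ _ heLo ?_
          zify [show u.val - v.val - 1 ≤ N+1 by omega, hk2, hvN, show v.val ≤ N+1 by omega,
            show 1 ≤ u.val - v.val by omega, show v.val ≤ u.val by omega]
          ring
    · -- u ≤ v ≤ N : e = N+2-v, a = v-u, b = N-(v-u)
      refine reach_comp u v (v.val - u.val) (N - (v.val - u.val)) _ _ heHi ?_
      zify [show u.val ≤ v.val from hge, show v.val - u.val ≤ N by omega,
        show v.val ≤ N+2 by omega]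
      ring

lemma reach_last_inv : ∀ (k : ℕ) (u : Fin (N+2)),
    reach (N+2) k u ⟨N+1, by omega⟩ →
    (k = 0 ∧ u.val = N+1) ∨ ∃ a b : ℕ, k = u.val + a * (N+2) + b * (N+1) + 1 := by
  intro k
  induction k with
  | zero =>
    intro u h
    rw [reach_zero_iff] at h
    exact Or.inl ⟨rfl, by rw [h]⟩
  | succ k ih =>
    intro u h
    rw [reach_succ_iff] at h
    obtain ⟨c, hE, hr⟩ := h
    rcases ih c hr with ⟨hk0, hc⟩ | ⟨a, b, hk⟩
    · subst hk0
      rcases hE with ⟨hu0, _⟩ | hstep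
      · exact Or.inr ⟨0, 0, by rw [hu0]; ring⟩
      · exfalso; have := u.isLt; omega
    · rcases hE with ⟨hu0, hc'⟩ | hstep
      · rcases hc' with hN | hN1
        · refine Or.inr ⟨a, b+1, ?_⟩
          have hcN : c.val = N := by omega
          rw [hk, hcN, hu0]; ring
        · refine Or.inr ⟨a+1, b, ?_⟩
          have hcN : c.val = N+1 := by omega
          rw [hk, hcN, hu0]; ring
      · exact Or.inr ⟨a, b, by rw [hk, hstep]; ring⟩

lemma not_reach_sq :
    ¬ reach (N+2) ((N+1)^2) (⟨N+1, by omega⟩ : Fin (N+2)) ⟨N+1, by omega⟩ := by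
  intro h
  rcases reach_last_inv _ _ h with ⟨h0, _⟩ | ⟨a, b, hk⟩
  · have : (N+1)^2 ≠ 0 := by positivity
    exact this h0
  · have hZ : ((N:ℤ)+1)^2 = ((N:ℤ)+1) + (a:ℤ) * ((N:ℤ)+2) + (b:ℤ) * ((N:ℤ)+1) + 1 := by
      exact_mod_cast hk
    have hq : (a:ℤ) + 1 = ((N:ℤ)+1) * ((N:ℤ) - a - b) := by linear_combination -hZ
    have hq1 : (1:ℤ) ≤ (N:ℤ) - a - b := by nlinarith [hq]
    have haN : (N:ℤ) ≤ (a:ℤ) := by nlinarith [hq, hq1]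
    have hb : (0:ℤ) ≤ (b:ℤ) := by positivity
    nlinarith [hZ, haN, hb]

lemma reach_all_succ (k : ℕ) (h : ∀ u v : Fin (N+2), reach (N+2) k u v) :
    ∀ u v : Fin (N+2), reach (N+2) (k+1) u v := by
  intro u v
  rw [reach_succ_iff]
  by_cases hu : u.val = 0
  · exact ⟨⟨N+1, by omega⟩, Or.inl ⟨hu, Or.inr (by simp)⟩, h _ v⟩
  · exact ⟨⟨u.val - 1, by have := u.isLt; omega⟩, Or.inr (by simp; omega), h _ v⟩

lemma reach_all_of_le (k l : ℕ) (hkl : k ≤ l) (h : ∀ u v : Fin (N+2), reach (N+2) k u v) :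
    ∀ u v : Fin (N+2), reach (N+2) l u v := by
  induction l, hkl using Nat.le_induction with
  | base => exact h
  | succ l _ ih => exact reach_all_succ l ih


/-- The tensor. -/
def Aten (n m : ℕ) : Fin n → (Fin (m-1) → Fin n) → ℝ :=
  fun i t => ∑ c, if (∀ k, t k = c) then wielandt n i c else 0

lemma wielandt_nonneg {n : ℕ} (i j : Fin n) : 0 ≤ wielandt n i j := by
  unfold wielandt; split <;> norm_num

lemma wielandt_pos_iff {n : ℕ} (i j : Fin n) :
    0 < wielandt n i j ↔
      ((i.val = 0 ∧ (j.val = n - 2 ∨ j.val = n - 1)) ∨ i.val = j.val + 1) := by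
  unfold wielandt
  split <;> simp_all

lemma Aten_nonneg {n m : ℕ} (u : Fin n) (t : Fin (m-1) → Fin n) : 0 ≤ Aten n m u t := by
  refine Finset.sum_nonneg fun c _ => ?_
  split
  · exact wielandt_nonneg _ _
  · exact le_refl 0

lemma Aten_eq_zero {n m : ℕ} (i : Fin n) (t : Fin (m-1) → Fin n)
    (h : ¬ ∀ k k' : Fin (m-1), t k = t k') : Aten n m i t = 0 := by
  refine Finset.sum_eq_zero fun c _ => ?_
  rw [if_neg]
  intro hall
  exact h fun k k' => by rw [hall k, hall k']

lemma Aten_const {n m : ℕ} (hm : 2 ≤ m) (i j : Fin n) :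
    Aten n m i (fun _ => j) = wielandt n i j := by
  unfold Aten
  have : ∀ c : Fin n, (∀ _k : Fin (m-1), j = c) = (j = c) := by
    intro c
    apply propext
    exact ⟨fun h => h (⟨0, by omega⟩ : Fin (m-1)), fun h _ => h⟩
  simp only [this]
  simp [Finset.sum_ite_eq' Finset.univ j (wielandt n i)]

lemma Aten_pos_iff {n m : ℕ} (u : Fin n) (t : Fin (m-1) → Fin n) :
    0 < Aten n m u t ↔ ∃ c, (∀ k, t k = c) ∧ 0 < wielandt n u c := by
  constructor
  · intro h
    by_contra hno
    push_neg at hno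
    have : Aten n m u t ≤ 0 := by
      refine Finset.sum_nonpos fun c _ => ?_
      split
      · rename_i hc
        exact hno c hc
      · exact le_refl 0
    linarith
  · rintro ⟨c, hc, hpos⟩
    refine Finset.sum_pos' (fun d _ => ?_) ⟨c, Finset.mem_univ c, ?_⟩
    · split
      · exact wielandt_nonneg _ _
      · exact le_refl 0
    · rw [if_pos hc]; exact hpos

lemma majPow_nonneg (n m : ℕ) : ∀ (k : ℕ) (u j : Fin n), 0 ≤ majPow n m (Aten n m) k u j := by
  intro k
  induction k with
  | zero =>
    intro u j
    simp only [majPow, Matrix.one_apply]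
    split <;> norm_num
  | succ k ih =>
    intro u j
    simp only [majPow]
    refine Finset.sum_nonneg fun t _ => ?_
    exact mul_nonneg (Aten_nonneg u t) (Finset.prod_nonneg fun i _ => ih _ j)

lemma majPow_succ_pos_iff (n m : ℕ) (hm : 2 ≤ m) (k : ℕ) (u j : Fin n) :
    0 < majPow n m (Aten n m) (k+1) u j ↔
      ∃ c, 0 < wielandt n u c ∧ 0 < majPow n m (Aten n m) k c j := by
  have hcard : m - 1 ≠ 0 := by omega
  constructor
  · intro h
    simp only [majPow] at h
    -- some term positive
    have hex : ∃ t : Fin (m-1) → Fin n,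
        0 < Aten n m u t * ∏ i, majPow n m (Aten n m) k (t i) j := by
      by_contra hno
      push_neg at hno
      have : (∑ t : Fin (m-1) → Fin n,
          Aten n m u t * ∏ i, majPow n m (Aten n m) k (t i) j) ≤ 0 :=
        Finset.sum_nonpos fun t _ => hno t
      linarith
    obtain ⟨t, ht⟩ := hex
    have hA : 0 < Aten n m u t := by
      rcases lt_or_eq_of_le (Aten_nonneg u t) with hp | hp
      · exact hp
      · rw [← hp, zero_mul] at ht; linarith
    obtain ⟨c, hct, hcpos⟩ := (Aten_pos_iff u t).mp hA
    refine ⟨c, hcpos, ?_⟩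
    have htc : t = fun _ => c := funext hct
    rw [htc] at ht
    have hprod : (∏ _i : Fin (m-1), majPow n m (Aten n m) k c j)
        = (majPow n m (Aten n m) k c j) ^ (m-1) := by
      simp [Finset.prod_const]
    rw [hprod] at ht
    have hmp : 0 < Aten n m u (fun _ => c) * (majPow n m (Aten n m) k c j) ^ (m-1) := ht
    by_contra hnp
    have h0 : majPow n m (Aten n m) k c j = 0 :=
      le_antisymm (le_of_not_gt hnp) (majPow_nonneg n m k c j)
    rw [h0, zero_pow hcard, mul_zero] at hmp
    linarith
  · rintro ⟨c, hc, hpos⟩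
    simp only [majPow]
    refine Finset.sum_pos' (fun t _ => mul_nonneg (Aten_nonneg u t)
      (Finset.prod_nonneg fun i _ => majPow_nonneg n m k _ j)) ⟨fun _ => c, Finset.mem_univ _, ?_⟩
    have h1 : Aten n m u (fun _ => c) = wielandt n u c := Aten_const (by omega) u c
    have hprod : (∏ _i : Fin (m-1), majPow n m (Aten n m) k c j)
        = (majPow n m (Aten n m) k c j) ^ (m-1) := by
      simp [Finset.prod_const]
    rw [h1, hprod]
    exact mul_pos hc (pow_pos hpos _)

lemma majPow_pos_iff_reach (n m : ℕ) (hm : 2 ≤ m) :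
    ∀ (k : ℕ) (u j : Fin n), 0 < majPow n m (Aten n m) k u j ↔ reach n k u j := by
  intro k
  induction k with
  | zero =>
    intro u j
    rw [reach_zero_iff]
    simp only [majPow, Matrix.one_apply]
    split <;> simp_all
  | succ k ih =>
    intro u j
    rw [majPow_succ_pos_iff n m hm, reach_succ_iff]
    constructor
    · rintro ⟨c, hc, hp⟩
      exact ⟨c, (wielandt_pos_iff u c).mp hc, (ih c j).mp hp⟩
    · rintro ⟨c, hc, hp⟩
      exact ⟨c, (wielandt_pos_iff u c).mpr hc, (ih c j).mpr hp⟩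


end Stmt19Aux

/-- sharpness — for all `n, m ≥ 2` there is a nonnegative
primitive tensor with support on equal trailing indices, majorization matrix
the Wielandt matrix, and primitive degree `(n-1)² + 1`. -/
theorem stmt_19 (n m : ℕ) (hm : 2 ≤ m) (hn : 2 ≤ n) :
    ∃ A : Fin n → (Fin (m-1) → Fin n) → ℝ,
      (∀ u t, 0 ≤ A u t) ∧
      (∀ (i : Fin n) (t : Fin (m-1) → Fin n),
        (¬ ∀ k k' : Fin (m-1), t k = t k') → A i t = 0) ∧
      maj n m A = wielandt n ∧
      Primitive n m A ∧
      sInf {r : ℕ | 0 < r ∧ ∀ u j : Fin n, 0 < majPow n m A r u j}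
        = (n - 1) ^ 2 + 1 := by
  obtain ⟨N, rfl⟩ : ∃ N, n = N + 2 := ⟨n - 2, by omega⟩
  refine ⟨Stmt19Aux.Aten (N+2) m, fun u t => Stmt19Aux.Aten_nonneg u t,
    fun i t h => Stmt19Aux.Aten_eq_zero i t h, ?_, ?_, ?_⟩
  · funext i j
    exact Stmt19Aux.Aten_const hm i j
  · exact ⟨(N+1)^2 + 1, by positivity, fun u j =>
      (Stmt19Aux.majPow_pos_iff_reach (N+2) m hm _ u j).mpr (Stmt19Aux.reach_all u j)⟩
  · have hiff := Stmt19Aux.majPow_pos_iff_reach (N+2) m hm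
    have hmem : ((N+1)^2 + 1) ∈
        {r : ℕ | 0 < r ∧ ∀ u j : Fin (N+2), 0 < majPow (N+2) m (Stmt19Aux.Aten (N+2) m) r u j} :=
      ⟨by positivity, fun u j => (hiff _ u j).mpr (Stmt19Aux.reach_all u j)⟩
    have hgoal : N + 2 - 1 = N + 1 := by omega
    rw [hgoal]
    refine le_antisymm (Nat.sInf_le hmem) (le_csInf ⟨_, hmem⟩ ?_)
    rintro r ⟨hr0, hr⟩
    by_contra hlt
    push_neg at hlt
    have hall : ∀ u v : Fin (N+2), Stmt19Aux.reach (N+2) r u v :=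
      fun u v => (hiff r u v).mp (hr u v)
    have := Stmt19Aux.reach_all_of_le r ((N+1)^2) (by omega) hall
    exact Stmt19Aux.not_reach_sq (this _ _)
end
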